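/- Let ι, D, A be types with injective maps d : ι → D and a : ι → A. Let p₁, p₂, p₃ ≥ 0 and let μ_D, μ_A, μ_F be probability mass functions on Finset D, Finset A, and Finset ι respectively, each locally decaying with rates p₁, p₂, p₃. Consider the product distribution on triples (S_D, S_A, F) (i.e., the three random subsets are independent). Then for every finite subset T of ι, the probability of the event {(S_D,S_A,F) : ∀ i ∈ T, d i ∈ S_D ∨ a i ∈ S_A ∨ i ∈ F} is at most (p₁ + p₂ + p₃)^{T.card}. -/

import Mathlib

open scoped ENNReal

/-- A probability mass function `μ` on finite subsets of `ι` is *locally decaying*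
with rate `τ` if for every finite `B ⊆ ι` the probability that `B` is contained in
the random subset is at most `τ ^ |B|`. -/
def LocallyDecaying {ι : Type*} [DecidableEq ι] (μ : PMF (Finset ι)) (τ : ℝ) : Prop :=
  ∀ B : Finset ι,
    (∑' S : Finset ι, if B ⊆ S then μ S else 0) ≤ ENNReal.ofReal (τ ^ B.card)

open Classical in
theorem fault_aux {ι D A : Type*}
    [DecidableEq ι] [DecidableEq D] [DecidableEq A]
    (d : ι → D) (a : ι → A) (hd : Function.Injective d) (ha : Function.Injective a)
    (p₁ p₂ p₃ : ℝ) (hp₁ : 0 ≤ p₁) (hp₂ : 0 ≤ p₂) (hp₃ : 0 ≤ p₃)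
    (μD : PMF (Finset D)) (μA : PMF (Finset A)) (μF : PMF (Finset ι))
    (hμD : LocallyDecaying μD p₁) (hμA : LocallyDecaying μA p₂)
    (hμF : LocallyDecaying μF p₃) :
    ∀ T : Finset ι, ∀ B₁ : Finset D, ∀ B₂ : Finset A, ∀ B₃ : Finset ι,
      (∀ i ∈ T, d i ∉ B₁ ∧ a i ∉ B₂ ∧ i ∉ B₃) →
      (∑' SD : Finset D, ∑' SA : Finset A, ∑' F : Finset ι,
          if B₁ ⊆ SD ∧ B₂ ⊆ SA ∧ B₃ ⊆ F ∧ ∀ i ∈ T, d i ∈ SD ∨ a i ∈ SA ∨ i ∈ F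
          then μD SD * μA SA * μF F else 0)
        ≤ ENNReal.ofReal (p₁ ^ B₁.card * p₂ ^ B₂.card * p₃ ^ B₃.card * (p₁ + p₂ + p₃) ^ T.card) := by
  intro T
  induction T using Finset.induction_on with
  | empty =>
    intro B₁ B₂ B₃ _
    have hpt : ∀ (SD : Finset D) (SA : Finset A) (F : Finset ι),
        (if B₁ ⊆ SD ∧ B₂ ⊆ SA ∧ B₃ ⊆ F ∧ ∀ i ∈ (∅ : Finset ι), d i ∈ SD ∨ a i ∈ SA ∨ i ∈ F
          then μD SD * μA SA * μF F else 0)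
        = (if B₁ ⊆ SD then μD SD else 0) * ((if B₂ ⊆ SA then μA SA else 0) *
            (if B₃ ⊆ F then μF F else 0)) := by
      intro SD SA F
      by_cases h1 : B₁ ⊆ SD <;> by_cases h2 : B₂ ⊆ SA <;> by_cases h3 : B₃ ⊆ F <;>
        simp [h1, h2, h3, mul_assoc]
    simp_rw [hpt, ENNReal.tsum_mul_left, ENNReal.tsum_mul_right]
    calc (∑' SD, if B₁ ⊆ SD then μD SD else 0) *
          ((∑' SA, if B₂ ⊆ SA then μA SA else 0) * (∑' F, if B₃ ⊆ F then μF F else 0))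
        ≤ ENNReal.ofReal (p₁ ^ B₁.card) *
          (ENNReal.ofReal (p₂ ^ B₂.card) * ENNReal.ofReal (p₃ ^ B₃.card)) := by
          exact mul_le_mul' (hμD B₁) (mul_le_mul' (hμA B₂) (hμF B₃))
      _ = ENNReal.ofReal (p₁ ^ B₁.card * p₂ ^ B₂.card * p₃ ^ B₃.card * (p₁ + p₂ + p₃) ^ (0:ℕ)) := by
          rw [← ENNReal.ofReal_mul (by positivity), ← ENNReal.ofReal_mul (by positivity)]
          ring_nf
  | @insert i s his IH =>
    intro B₁ B₂ B₃ h
    obtain ⟨hi1, hi2, hi3⟩ := h i (Finset.mem_insert_self i s)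
    have hpt : ∀ (SD : Finset D) (SA : Finset A) (F : Finset ι),
        (if B₁ ⊆ SD ∧ B₂ ⊆ SA ∧ B₃ ⊆ F ∧ ∀ j ∈ insert i s, d j ∈ SD ∨ a j ∈ SA ∨ j ∈ F
          then μD SD * μA SA * μF F else 0)
        ≤ (if insert (d i) B₁ ⊆ SD ∧ B₂ ⊆ SA ∧ B₃ ⊆ F ∧ ∀ j ∈ s, d j ∈ SD ∨ a j ∈ SA ∨ j ∈ F
            then μD SD * μA SA * μF F else 0)
          + (if B₁ ⊆ SD ∧ insert (a i) B₂ ⊆ SA ∧ B₃ ⊆ F ∧ ∀ j ∈ s, d j ∈ SD ∨ a j ∈ SA ∨ j ∈ F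
            then μD SD * μA SA * μF F else 0)
          + (if B₁ ⊆ SD ∧ B₂ ⊆ SA ∧ insert i B₃ ⊆ F ∧ ∀ j ∈ s, d j ∈ SD ∨ a j ∈ SA ∨ j ∈ F
            then μD SD * μA SA * μF F else 0) := by
      intro SD SA F
      by_cases hE : B₁ ⊆ SD ∧ B₂ ⊆ SA ∧ B₃ ⊆ F ∧ ∀ j ∈ insert i s, d j ∈ SD ∨ a j ∈ SA ∨ j ∈ F
      · obtain ⟨e1, e2, e3, e4⟩ := hE
        have hs : ∀ j ∈ s, d j ∈ SD ∨ a j ∈ SA ∨ j ∈ F := fun j hj =>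
          e4 j (Finset.mem_insert_of_mem hj)
        rw [if_pos ⟨e1, e2, e3, e4⟩]
        rcases e4 i (Finset.mem_insert_self i s) with hc | hc | hc
        · rw [if_pos ⟨Finset.insert_subset hc e1, e2, e3, hs⟩]
          exact le_self_add.trans le_self_add
        · rw [if_pos (show B₁ ⊆ SD ∧ insert (a i) B₂ ⊆ SA ∧ B₃ ⊆ F ∧
              ∀ j ∈ s, d j ∈ SD ∨ a j ∈ SA ∨ j ∈ F from
              ⟨e1, Finset.insert_subset hc e2, e3, hs⟩)]
          exact le_add_self.trans le_self_add
        · rw [if_pos (show B₁ ⊆ SD ∧ B₂ ⊆ SA ∧ insert i B₃ ⊆ F ∧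
              ∀ j ∈ s, d j ∈ SD ∨ a j ∈ SA ∨ j ∈ F from
              ⟨e1, e2, Finset.insert_subset hc e3, hs⟩)]
          exact le_add_self
      · rw [if_neg hE]; positivity
    have hsum : (∑' SD : Finset D, ∑' SA : Finset A, ∑' F : Finset ι,
        if B₁ ⊆ SD ∧ B₂ ⊆ SA ∧ B₃ ⊆ F ∧ ∀ j ∈ insert i s, d j ∈ SD ∨ a j ∈ SA ∨ j ∈ F
          then μD SD * μA SA * μF F else 0)
        ≤ (∑' SD : Finset D, ∑' SA : Finset A, ∑' F : Finset ι,
            if insert (d i) B₁ ⊆ SD ∧ B₂ ⊆ SA ∧ B₃ ⊆ F ∧ ∀ j ∈ s, d j ∈ SD ∨ a j ∈ SA ∨ j ∈ F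
              then μD SD * μA SA * μF F else 0)
          + (∑' SD : Finset D, ∑' SA : Finset A, ∑' F : Finset ι,
            if B₁ ⊆ SD ∧ insert (a i) B₂ ⊆ SA ∧ B₃ ⊆ F ∧ ∀ j ∈ s, d j ∈ SD ∨ a j ∈ SA ∨ j ∈ F
              then μD SD * μA SA * μF F else 0)
          + (∑' SD : Finset D, ∑' SA : Finset A, ∑' F : Finset ι,
            if B₁ ⊆ SD ∧ B₂ ⊆ SA ∧ insert i B₃ ⊆ F ∧ ∀ j ∈ s, d j ∈ SD ∨ a j ∈ SA ∨ j ∈ F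
              then μD SD * μA SA * μF F else 0) := by
      calc _ ≤ ∑' SD : Finset D, ∑' SA : Finset A, ∑' F : Finset ι,
            ((if insert (d i) B₁ ⊆ SD ∧ B₂ ⊆ SA ∧ B₃ ⊆ F ∧ ∀ j ∈ s, d j ∈ SD ∨ a j ∈ SA ∨ j ∈ F
              then μD SD * μA SA * μF F else 0)
            + (if B₁ ⊆ SD ∧ insert (a i) B₂ ⊆ SA ∧ B₃ ⊆ F ∧ ∀ j ∈ s, d j ∈ SD ∨ a j ∈ SA ∨ j ∈ F
              then μD SD * μA SA * μF F else 0)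
            + (if B₁ ⊆ SD ∧ B₂ ⊆ SA ∧ insert i B₃ ⊆ F ∧ ∀ j ∈ s, d j ∈ SD ∨ a j ∈ SA ∨ j ∈ F
              then μD SD * μA SA * μF F else 0)) :=
            ENNReal.tsum_le_tsum fun SD => ENNReal.tsum_le_tsum fun SA =>
              ENNReal.tsum_le_tsum fun F => hpt SD SA F
        _ = _ := by simp only [ENNReal.tsum_add]
    refine hsum.trans ?_
    have hcond : ∀ j ∈ s, d j ∉ B₁ ∧ a j ∉ B₂ ∧ j ∉ B₃ := fun j hj =>
      h j (Finset.mem_insert_of_mem hj)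
    have hne : ∀ j ∈ s, j ≠ i := fun j hj hji => his (hji ▸ hj)
    have h1 : ∀ j ∈ s, d j ∉ insert (d i) B₁ ∧ a j ∉ B₂ ∧ j ∉ B₃ := by
      intro j hj
      refine ⟨?_, (hcond j hj).2.1, (hcond j hj).2.2⟩
      simp only [Finset.mem_insert, not_or]
      exact ⟨fun hdd => hne j hj (hd hdd), (hcond j hj).1⟩
    have h2 : ∀ j ∈ s, d j ∉ B₁ ∧ a j ∉ insert (a i) B₂ ∧ j ∉ B₃ := by
      intro j hj
      refine ⟨(hcond j hj).1, ?_, (hcond j hj).2.2⟩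
      simp only [Finset.mem_insert, not_or]
      exact ⟨fun haa => hne j hj (ha haa), (hcond j hj).2.1⟩
    have h3 : ∀ j ∈ s, d j ∉ B₁ ∧ a j ∉ B₂ ∧ j ∉ insert i B₃ := by
      intro j hj
      refine ⟨(hcond j hj).1, (hcond j hj).2.1, ?_⟩
      simp only [Finset.mem_insert, not_or]
      exact ⟨hne j hj, (hcond j hj).2.2⟩
    have c1 := IH (insert (d i) B₁) B₂ B₃ h1
    have c2 := IH B₁ (insert (a i) B₂) B₃ h2
    have c3 := IH B₁ B₂ (insert i B₃) h3
    rw [Finset.card_insert_of_notMem hi1] at c1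
    rw [Finset.card_insert_of_notMem hi2] at c2
    rw [Finset.card_insert_of_notMem hi3] at c3
    calc _ ≤ ENNReal.ofReal (p₁ ^ (B₁.card + 1) * p₂ ^ B₂.card * p₃ ^ B₃.card * (p₁ + p₂ + p₃) ^ s.card)
          + ENNReal.ofReal (p₁ ^ B₁.card * p₂ ^ (B₂.card + 1) * p₃ ^ B₃.card * (p₁ + p₂ + p₃) ^ s.card)
          + ENNReal.ofReal (p₁ ^ B₁.card * p₂ ^ B₂.card * p₃ ^ (B₃.card + 1) * (p₁ + p₂ + p₃) ^ s.card) :=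
          add_le_add (add_le_add c1 c2) c3
      _ = _ := by
        rw [← ENNReal.ofReal_add (by positivity) (by positivity),
          ← ENNReal.ofReal_add (by positivity) (by positivity),
          Finset.card_insert_of_notMem his]
        congr 1
        ring

/-- **Union bound over fault types (equations (union_bound) and (multinomial) in
the proof of Lemma 1).** With `S_D ~ μ_D`, `S_A ~ μ_A`, `F ~ μ_F` independent and
locally decaying with rates `p₁, p₂, p₃ ≥ 0` (the supports of the input errors on
blocks `D` and `A`, labelled via injections `d, a`, and the faulty CNOT locations),
the probability that every edge `i ∈ T` carries a fault, i.e. that for every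
`i ∈ T` one has `d i ∈ S_D` or `a i ∈ S_A` or `i ∈ F`, is at most
`(p₁ + p₂ + p₃) ^ |T|`. -/
theorem fault_union_bound {ι D A : Type*}
    [DecidableEq ι] [DecidableEq D] [DecidableEq A]
    (d : ι → D) (a : ι → A) (hd : Function.Injective d) (ha : Function.Injective a)
    (p₁ p₂ p₃ : ℝ) (hp₁ : 0 ≤ p₁) (hp₂ : 0 ≤ p₂) (hp₃ : 0 ≤ p₃)
    (μD : PMF (Finset D)) (μA : PMF (Finset A)) (μF : PMF (Finset ι))
    (hμD : LocallyDecaying μD p₁) (hμA : LocallyDecaying μA p₂)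
    (hμF : LocallyDecaying μF p₃) :
    ∀ T : Finset ι,
      (∑' SD : Finset D, ∑' SA : Finset A, ∑' F : Finset ι,
          if ∀ i ∈ T, d i ∈ SD ∨ a i ∈ SA ∨ i ∈ F
          then μD SD * μA SA * μF F else 0)
        ≤ ENNReal.ofReal ((p₁ + p₂ + p₃) ^ T.card) := by
  intro T
  have := fault_aux d a hd ha p₁ p₂ p₃ hp₁ hp₂ hp₃ μD μA μF hμD hμA hμF T ∅ ∅ ∅ (by simp)
  simpa using this
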